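/- Let Z be a metric space, 0 < r ≤ 1/6, and X = RH(Z) the Rips hyperbolic approximation with level function l. If there exists D > 0 such that for every k ∈ ℤ every connected component of the level-k subgraph l⁻¹(k) has diameter at most D (in the graph metric of X), then l : X → ℝ is metrically proper on the connected components: for every N > 0 there is M > 0 such that every connected component of l⁻¹([c − N, c + N]) has diameter at most M, for every c ∈ ℝ. -/

import Mathlib

/-- Adjacency in the Rips hyperbolic approximation `RH(Z)`: two distinct vertices are
adjacent iff their levels differ by at most 1 and the distance of the underlying points
is at most `r` to the power of the lower of the two levels (this encodes both the
horizontal and the radial edges). -/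
def RHAdj {Z : Type*} [MetricSpace Z] (r : ℝ) (v w : Z × ℤ) : Prop :=
  v ≠ w ∧ |v.2 - w.2| ≤ 1 ∧ dist v.1 w.1 ≤ r ^ (min v.2 w.2)

/-- The Rips hyperbolic approximation graph `RH(Z)`. -/
def RHGraph (Z : Type*) [MetricSpace Z] (r : ℝ) : SimpleGraph (Z × ℤ) where
  Adj := RHAdj r
  symm := by
    constructor
    rintro v w ⟨h1, h2, h3⟩
    exact ⟨h1.symm, by rwa [abs_sub_comm], by rwa [min_comm, dist_comm]⟩
  loopless := by constructor; rintro v ⟨h1, -⟩; exact h1 rfl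

/-- A chain of edges of `RH(Z)` staying inside a vertex subset `S`. -/
def ChainIn {Z : Type*} [MetricSpace Z] (r : ℝ) (S : Set (Z × ℤ)) (v w : Z × ℤ) : Prop :=
  ∃ (n : ℕ) (c : ℕ → Z × ℤ), c 0 = v ∧ c n = w ∧ (∀ i ≤ n, c i ∈ S) ∧
    ∀ i < n, c i = c (i + 1) ∨ RHAdj r (c i) (c (i + 1))

/-- A vertical walk from `(x, k + n)` down to `(x, k)` of length `n`. -/
lemma vert_walk {Z : Type*} [MetricSpace Z] {r : ℝ} (hr : 0 < r) (x : Z) (k : ℤ) :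
    ∀ n : ℕ, ∃ p : (RHGraph Z r).Walk (x, k + n) (x, k), p.length = n := by
  intro n
  induction n with
  | zero =>
    exact ⟨(SimpleGraph.Walk.nil : (RHGraph Z r).Walk (x, k) (x, k)).copy (by simp) rfl,
      by simp⟩
  | succ m ih =>
    obtain ⟨p, hp⟩ := ih
    have hadj : (RHGraph Z r).Adj (x, k + (m + 1 : ℕ)) (x, k + m) := by
      refine ⟨?_, ?_, ?_⟩
      · intro heq
        have := congrArg Prod.snd heq
        simp only at this
        omega
      · have : (k + ((m : ℤ) + 1)) - (k + m) = 1 := by ring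
        push_cast
        rw [this]
        norm_num
      · simpa using (zpow_pos hr _).le
    exact ⟨SimpleGraph.Walk.cons hadj p, by simp [hp]⟩

/-- Chains give reachability. -/
lemma chain_reachable {Z : Type*} [MetricSpace Z] {r : ℝ} {S : Set (Z × ℤ)} {v w : Z × ℤ}
    (hc : ChainIn r S v w) : (RHGraph Z r).Reachable v w := by
  obtain ⟨n, c, h0, hn, -, hstep⟩ := hc
  subst h0 hn
  induction n with
  | zero => exact SimpleGraph.Reachable.refl _
  | succ m ih =>
    have h1 : (RHGraph Z r).Reachable (c 0) (c m) :=
      ih fun i hi => hstep i (by omega)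
    rcases hstep m (by omega) with heq | hadj
    · exact heq ▸ h1
    · exact h1.trans (SimpleGraph.Adj.reachable
        (show (RHGraph Z r).Adj (c m) (c (m + 1)) from hadj))

/-- If every connected component of every level-`k` subgraph of `RH(Z)`
has diameter at most `D` in the graph metric of `RH(Z)`, then the level function is
metrically proper on the connected components: for every `N > 0` there is `M > 0`
bounding (in the graph metric) the diameter of every connected component of
`l⁻¹([c - N, c + N])` for every `c ∈ ℝ`. -/
theorem stmt17 {Z : Type*} [MetricSpace Z] (r : ℝ) (hr : 0 < r) (hr6 : r ≤ 1 / 6)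
    (D : ℕ) (hD : 0 < D)
    (h : ∀ (k : ℤ) (v w : Z × ℤ), ChainIn r {u : Z × ℤ | u.2 = k} v w →
      ((RHGraph Z r).dist v w : ℝ) ≤ D) :
    ∀ N > (0:ℝ), ∃ M > (0:ℝ), ∀ (c : ℝ) (v w : Z × ℤ),
      ChainIn r {u : Z × ℤ | (u.2 : ℝ) ∈ Set.Icc (c - N) (c + N)} v w →
      ((RHGraph Z r).dist v w : ℝ) ≤ M := by
  intro N hN
  refine ⟨4 * N + D, by positivity, ?_⟩
  intro c v w hc
  obtain ⟨n, ch, h0, hn, hmem, hstep⟩ := hc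
  set K0 : ℤ := ⌈c - N⌉ with hK0
  -- level bounds for vertices in the band
  have hband : ∀ u : Z × ℤ, (u.2 : ℝ) ∈ Set.Icc (c - N) (c + N) →
      K0 ≤ u.2 ∧ ((u.2 - K0 : ℤ) : ℝ) ≤ 2 * N := by
    intro u ⟨hl, hu⟩
    have h1 : K0 ≤ u.2 := Int.ceil_le.mpr hl
    have h2 : (c - N : ℝ) ≤ K0 := by
      have := Int.le_ceil (c - N)
      exact_mod_cast this
    refine ⟨h1, ?_⟩
    push_cast
    linarith
  have hv := hband v (by have := hmem 0 (by omega); rw [h0] at this; exact this)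
  have hw := hband w (by have := hmem n le_rfl; rw [hn] at this; exact this)
  -- the projected chain at level K0
  have hchain : ChainIn r {u : Z × ℤ | u.2 = K0} (v.1, K0) (w.1, K0) := by
    refine ⟨n, fun i => ((ch i).1, K0), ?_, ?_, fun i _ => rfl, ?_⟩
    · show ((ch 0).1, K0) = (v.1, K0); rw [h0]
    · show ((ch n).1, K0) = (w.1, K0); rw [hn]
    intro i hi
    rcases hstep i (by omega) with heq | hadj
    · left; show ((ch i).1, K0) = ((ch (i + 1)).1, K0); rw [heq]
    · obtain ⟨hne, hlev, hdist⟩ := hadj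
      by_cases hx : (ch i).1 = (ch (i + 1)).1
      · left; show ((ch i).1, K0) = ((ch (i + 1)).1, K0); rw [hx]
      · right
        refine ⟨by simp [Prod.ext_iff, hx], by simp, ?_⟩
        refine le_trans hdist ?_
        have hmin : K0 ≤ min (ch i).2 (ch (i + 1)).2 :=
          le_min (hband _ (hmem i (by omega))).1 (hband _ (hmem (i + 1) hi)).1
        simpa using zpow_le_zpow_right_of_le_one₀ hr (by linarith) hmin
  -- walks: v down to (v.1, K0), across, and up to w
  obtain ⟨p1, hp1⟩ := vert_walk (r := r) hr v.1 K0 (v.2 - K0).toNat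
  obtain ⟨p3, hp3⟩ := vert_walk (r := r) hr w.1 K0 (w.2 - K0).toNat
  have hv2 : (v.1, K0 + ((v.2 - K0).toNat : ℤ)) = v := by
    rw [Int.toNat_of_nonneg (by omega)]
    ext <;> simp
  have hw2 : (w.1, K0 + ((w.2 - K0).toNat : ℤ)) = w := by
    rw [Int.toNat_of_nonneg (by omega)]
    ext <;> simp
  obtain ⟨p2, hp2⟩ := (chain_reachable hchain).exists_walk_length_eq_dist
  have hd2 : ((RHGraph Z r).dist (v.1, K0) (w.1, K0) : ℝ) ≤ D := h K0 _ _ hchain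
  -- compose
  have hdist : (RHGraph Z r).dist v w ≤
      (v.2 - K0).toNat + ((RHGraph Z r).dist (v.1, K0) (w.1, K0) + (w.2 - K0).toNat) := by
    have := SimpleGraph.dist_le
      ((p1.copy hv2 rfl).append (p2.append (p3.copy hw2 rfl).reverse))
    simpa [SimpleGraph.Walk.length_append, SimpleGraph.Walk.length_copy,
      SimpleGraph.Walk.length_reverse, hp1, hp2, hp3] using this
  have hvN : ((v.2 - K0).toNat : ℝ) ≤ 2 * N := by
    have : (((v.2 - K0).toNat : ℤ) : ℝ) ≤ 2 * N := by
      rw [Int.toNat_of_nonneg (by omega)]; exact hv.2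
    exact_mod_cast this
  have hwN : ((w.2 - K0).toNat : ℝ) ≤ 2 * N := by
    have : (((w.2 - K0).toNat : ℤ) : ℝ) ≤ 2 * N := by
      rw [Int.toNat_of_nonneg (by omega)]; exact hw.2
    exact_mod_cast this
  calc ((RHGraph Z r).dist v w : ℝ)
      ≤ ((v.2 - K0).toNat : ℝ) + (((RHGraph Z r).dist (v.1, K0) (w.1, K0) : ℝ)
        + ((w.2 - K0).toNat : ℝ)) := by exact_mod_cast hdist
    _ ≤ 2 * N + (D + 2 * N) := by linarith
    _ = 4 * N + D := by ring
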